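/- Let d ≥ 1, let u : ℝ^d → ℂ be a smooth compactly supported function, and let a : ℝ^d → ℝ be smooth. Then 2·Re ∫_{ℝ^d} Δu(x)·(Δa(x)·conj(u)(x) + 2·⟨∇a(x), ∇conj(u)(x)⟩) dx = ∫_{ℝ^d} Δ²a(x)·|u(x)|² dx - 4·Re ∫_{ℝ^d} Σ_{j,k} ∂_j u(x)·∂_j∂_k a(x)·∂_k conj(u)(x) dx. -/

import Mathlib

open MeasureTheory Complex

noncomputable section

/-- Partial derivative `∂_j f` of a complex-valued function on `ℝ^d`. -/
def pdC {d : ℕ} (j : Fin d) (f : EuclideanSpace ℝ (Fin d) → ℂ)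
    (x : EuclideanSpace ℝ (Fin d)) : ℂ :=
  fderiv ℝ f x (EuclideanSpace.single j 1)

/-- Partial derivative `∂_j f` of a real-valued function on `ℝ^d`. -/
def pdR {d : ℕ} (j : Fin d) (f : EuclideanSpace ℝ (Fin d) → ℝ)
    (x : EuclideanSpace ℝ (Fin d)) : ℝ :=
  fderiv ℝ f x (EuclideanSpace.single j 1)

/-- Laplacian of a complex-valued function on `ℝ^d`:
the trace of the second Fréchet derivative. -/
def lapC {d : ℕ} (f : EuclideanSpace ℝ (Fin d) → ℂ)
    (x : EuclideanSpace ℝ (Fin d)) : ℂ :=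
  ∑ i : Fin d, iteratedFDeriv ℝ 2 f x
    ![EuclideanSpace.single i 1, EuclideanSpace.single i 1]

/-- Laplacian of a real-valued function on `ℝ^d`. -/
def lapR {d : ℕ} (f : EuclideanSpace ℝ (Fin d) → ℝ)
    (x : EuclideanSpace ℝ (Fin d)) : ℝ :=
  ∑ i : Fin d, iteratedFDeriv ℝ 2 f x
    ![EuclideanSpace.single i 1, EuclideanSpace.single i 1]

namespace MorawetzAux

variable {d : ℕ}

/-! ### Basic toolbox -/

lemma diffTop {F : Type*} [NormedAddCommGroup F] [NormedSpace ℝ F]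
    {f : EuclideanSpace ℝ (Fin d) → F} (hf : ContDiff ℝ (⊤:ℕ∞) f) : Differentiable ℝ f :=
  hf.differentiable (by simp)

lemma contDiff_pdC {f : EuclideanSpace ℝ (Fin d) → ℂ} (hf : ContDiff ℝ (⊤:ℕ∞) f) (j : Fin d) :
    ContDiff ℝ (⊤:ℕ∞) (pdC j f) :=
  (hf.fderiv_right (by norm_cast)).clm_apply contDiff_const

lemma contDiff_pdR {f : EuclideanSpace ℝ (Fin d) → ℝ} (hf : ContDiff ℝ (⊤:ℕ∞) f) (j : Fin d) :
    ContDiff ℝ (⊤:ℕ∞) (pdR j f) :=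
  (hf.fderiv_right (by norm_cast)).clm_apply contDiff_const

lemma supp_pdC {f : EuclideanSpace ℝ (Fin d) → ℂ} (hf : HasCompactSupport f) (j : Fin d) :
    HasCompactSupport (pdC j f) :=
  (hf.fderiv ℝ).comp_left (g := fun L : EuclideanSpace ℝ (Fin d) →L[ℝ] ℂ =>
    L (EuclideanSpace.single j 1)) rfl

lemma supp_pdR {f : EuclideanSpace ℝ (Fin d) → ℝ} (hf : HasCompactSupport f) (j : Fin d) :
    HasCompactSupport (pdR j f) :=
  (hf.fderiv ℝ).comp_left (g := fun L : EuclideanSpace ℝ (Fin d) →L[ℝ] ℝ =>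
    L (EuclideanSpace.single j 1)) rfl

lemma hcs_sum {ι : Type*} (s : Finset ι) {f : ι → EuclideanSpace ℝ (Fin d) → ℂ}
    (h : ∀ i, HasCompactSupport (f i)) :
    HasCompactSupport (fun x => ∑ i ∈ s, f i x) := by
  classical
  induction s using Finset.induction with
  | empty => simp only [Finset.sum_empty]; exact (HasCompactSupport.zero : HasCompactSupport (fun _ :
      EuclideanSpace ℝ (Fin d) => (0:ℂ)))
  | @insert i s hi ih =>
      have : (fun x => ∑ k ∈ insert i s, f k x) = fun x => f i x + ∑ k ∈ s, f k x := by
        funext x; rw [Finset.sum_insert hi]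
      rw [this]
      exact (h i).add ih

lemma pdC_add {f g : EuclideanSpace ℝ (Fin d) → ℂ} (hf : Differentiable ℝ f)
    (hg : Differentiable ℝ g) (j : Fin d) (x : EuclideanSpace ℝ (Fin d)) :
    pdC j (fun y => f y + g y) x = pdC j f x + pdC j g x := by
  simp [pdC, fderiv_fun_add (hf x) (hg x)]

lemma pdC_sub {f g : EuclideanSpace ℝ (Fin d) → ℂ} (hf : Differentiable ℝ f)
    (hg : Differentiable ℝ g) (j : Fin d) (x : EuclideanSpace ℝ (Fin d)) :
    pdC j (fun y => f y - g y) x = pdC j f x - pdC j g x := by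
  simp [pdC, fderiv_fun_sub (hf x) (hg x)]

lemma pdC_mul {f g : EuclideanSpace ℝ (Fin d) → ℂ} (hf : Differentiable ℝ f)
    (hg : Differentiable ℝ g) (j : Fin d) (x : EuclideanSpace ℝ (Fin d)) :
    pdC j (fun y => f y * g y) x = pdC j f x * g x + f x * pdC j g x := by
  simp only [pdC, fderiv_fun_mul (hf x) (hg x)]
  simp only [ContinuousLinearMap.add_apply, ContinuousLinearMap.smul_apply, smul_eq_mul]
  ring

lemma pdC_const_mul {f : EuclideanSpace ℝ (Fin d) → ℂ} (hf : Differentiable ℝ f)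
    (c : ℂ) (j : Fin d) (x : EuclideanSpace ℝ (Fin d)) :
    pdC j (fun y => c * f y) x = c * pdC j f x := by
  simp [pdC, fderiv_const_mul (hf x) c]

lemma pdC_sum {ι : Type*} (s : Finset ι) {f : ι → EuclideanSpace ℝ (Fin d) → ℂ}
    (hf : ∀ i, Differentiable ℝ (f i)) (j : Fin d) (x : EuclideanSpace ℝ (Fin d)) :
    pdC j (fun y => ∑ i ∈ s, f i y) x = ∑ i ∈ s, pdC j (f i) x := by
  simp [pdC, fderiv_fun_sum (fun i _ => (hf i) x)]

lemma pdC_conj {f : EuclideanSpace ℝ (Fin d) → ℂ} (hf : Differentiable ℝ f)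
    (j : Fin d) (x : EuclideanSpace ℝ (Fin d)) :
    pdC j (fun y => (starRingEnd ℂ) (f y)) x = (starRingEnd ℂ) (pdC j f x) := by
  have hL : HasFDerivAt (fun y => (starRingEnd ℂ) (f y))
      ((Complex.conjCLE.toContinuousLinearMap).comp (fderiv ℝ f x)) x :=
    (Complex.conjCLE.toContinuousLinearMap.hasFDerivAt).comp x (hf x).hasFDerivAt
  rw [pdC, hL.fderiv]
  rfl

lemma pdC_ofReal {f : EuclideanSpace ℝ (Fin d) → ℝ} (hf : Differentiable ℝ f)
    (j : Fin d) (x : EuclideanSpace ℝ (Fin d)) :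
    pdC j (fun y => ((f y : ℂ))) x = ((pdR j f x : ℂ)) := by
  have hL : HasFDerivAt (fun y => ((f y : ℂ)))
      ((Complex.ofRealCLM).comp (fderiv ℝ f x)) x :=
    (Complex.ofRealCLM.hasFDerivAt).comp x (hf x).hasFDerivAt
  rw [pdC, pdR, hL.fderiv]
  rfl

lemma pdR_re {f : EuclideanSpace ℝ (Fin d) → ℂ} (hf : Differentiable ℝ f)
    (j : Fin d) (x : EuclideanSpace ℝ (Fin d)) :
    pdR j (fun y => (f y).re) x = (pdC j f x).re := by
  have hL : HasFDerivAt (fun y => (f y).re)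
      ((Complex.reCLM).comp (fderiv ℝ f x)) x :=
    (Complex.reCLM.hasFDerivAt).comp x (hf x).hasFDerivAt
  rw [pdR, pdC, hL.fderiv]
  rfl

lemma pdC_pdC {f : EuclideanSpace ℝ (Fin d) → ℂ} (hf : ContDiff ℝ (⊤:ℕ∞) f)
    (j k : Fin d) (x : EuclideanSpace ℝ (Fin d)) :
    pdC j (pdC k f) x
      = fderiv ℝ (fderiv ℝ f) x (EuclideanSpace.single j 1) (EuclideanSpace.single k 1) := by
  set v : EuclideanSpace ℝ (Fin d) := EuclideanSpace.single k 1 with hv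
  have hL : HasFDerivAt (fun y => fderiv ℝ f y v)
      ((ContinuousLinearMap.apply ℝ ℂ v).comp
        (fderiv ℝ (fderiv ℝ f) x)) x :=
    ((ContinuousLinearMap.apply ℝ ℂ v).hasFDerivAt).comp x
      ((hf.fderiv_right (m := ((⊤:ℕ∞) : WithTop ℕ∞)) (by norm_cast)).differentiable
        (by norm_cast) x).hasFDerivAt
  show fderiv ℝ (fun y => fderiv ℝ f y v) x (EuclideanSpace.single j 1) = _
  rw [hL.fderiv]; rfl

lemma pdR_pdR {f : EuclideanSpace ℝ (Fin d) → ℝ} (hf : ContDiff ℝ (⊤:ℕ∞) f)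
    (j k : Fin d) (x : EuclideanSpace ℝ (Fin d)) :
    pdR j (pdR k f) x
      = fderiv ℝ (fderiv ℝ f) x (EuclideanSpace.single j 1) (EuclideanSpace.single k 1) := by
  set v : EuclideanSpace ℝ (Fin d) := EuclideanSpace.single k 1 with hv
  have hL : HasFDerivAt (fun y => fderiv ℝ f y v)
      ((ContinuousLinearMap.apply ℝ ℝ v).comp
        (fderiv ℝ (fderiv ℝ f) x)) x :=
    ((ContinuousLinearMap.apply ℝ ℝ v).hasFDerivAt).comp x
      ((hf.fderiv_right (m := ((⊤:ℕ∞) : WithTop ℕ∞)) (by norm_cast)).differentiable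
        (by norm_cast) x).hasFDerivAt
  show fderiv ℝ (fun y => fderiv ℝ f y v) x (EuclideanSpace.single j 1) = _
  rw [hL.fderiv]; rfl

lemma pdC_swap {f : EuclideanSpace ℝ (Fin d) → ℂ} (hf : ContDiff ℝ (⊤:ℕ∞) f)
    (j k : Fin d) (x : EuclideanSpace ℝ (Fin d)) :
    pdC j (pdC k f) x = pdC k (pdC j f) x := by
  have hsymm := (hf.contDiffAt (x := x)).isSymmSndFDerivAt
    (by
      rw [show ((2:WithTop ℕ∞)) = ((2:ℕ∞):WithTop ℕ∞) by norm_cast]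
      rw [minSmoothness_of_isRCLikeNormedField]
      exact WithTop.coe_le_coe.2 (le_top : (2:ℕ∞) ≤ ⊤))
  rw [pdC_pdC hf, pdC_pdC hf, hsymm]

lemma lapC_eq {f : EuclideanSpace ℝ (Fin d) → ℂ} (hf : ContDiff ℝ (⊤:ℕ∞) f)
    (x : EuclideanSpace ℝ (Fin d)) :
    lapC f x = ∑ i, pdC i (pdC i f) x := by
  unfold lapC
  refine Finset.sum_congr rfl fun i _ => ?_
  rw [iteratedFDeriv_two_apply, pdC_pdC hf]
  simp

lemma lapR_eq {f : EuclideanSpace ℝ (Fin d) → ℝ} (hf : ContDiff ℝ (⊤:ℕ∞) f)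
    (x : EuclideanSpace ℝ (Fin d)) :
    lapR f x = ∑ i, pdR i (pdR i f) x := by
  unfold lapR
  refine Finset.sum_congr rfl fun i _ => ?_
  rw [iteratedFDeriv_two_apply, pdR_pdR hf]
  simp

lemma integral_fderiv_zero (h : EuclideanSpace ℝ (Fin d) → ℝ)
    (hh : ContDiff ℝ (⊤ : ℕ∞) h) (hsupp : HasCompactSupport h) (v : EuclideanSpace ℝ (Fin d)) :
    ∫ x, fderiv ℝ h x v = 0 := by
  obtain ⟨C, hC⟩ := hh.lipschitzWith_of_hasCompactSupport hsupp (by simp)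
  have key := LipschitzWith.integral_lineDeriv_mul_eq (μ := volume)
    (LipschitzWith.const (b := (1:ℝ))) hC hsupp (-v)
  simp only [lineDeriv, deriv_const, zero_mul, integral_zero, mul_one, neg_neg] at key
  have heq : ∀ x, fderiv ℝ h x v = lineDeriv ℝ h x v := fun x =>
    ((hh.differentiable (by simp)) x).lineDeriv_eq_fderiv.symm
  simp only [heq]
  simp only [lineDeriv] at key ⊢
  exact key.symm

/-! ### The multiplier vector field -/

variable (u : EuclideanSpace ℝ (Fin d) → ℂ) (a : EuclideanSpace ℝ (Fin d) → ℝ)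

/-- `⟨∇a, ∇(conj u)⟩`. -/
def Sfun (x : EuclideanSpace ℝ (Fin d)) : ℂ :=
  ∑ k, (pdR k a x : ℂ) * (starRingEnd ℂ) (pdC k u x)

/-- `|∇u|²` as a complex number. -/
def Qfun (x : EuclideanSpace ℝ (Fin d)) : ℂ :=
  ∑ k, pdC k u x * (starRingEnd ℂ) (pdC k u x)

def T1 (j : Fin d) (y : EuclideanSpace ℝ (Fin d)) : ℂ :=
  (lapR a y : ℂ) * (pdC j u y * (starRingEnd ℂ) (u y) + u y * (starRingEnd ℂ) (pdC j u y))

def T2 (j : Fin d) (y : EuclideanSpace ℝ (Fin d)) : ℂ :=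
  (pdR j (lapR a) y : ℂ) * (u y * (starRingEnd ℂ) (u y))

def T3 (j : Fin d) (y : EuclideanSpace ℝ (Fin d)) : ℂ :=
  pdC j u y * Sfun u a y

def T4 (j : Fin d) (y : EuclideanSpace ℝ (Fin d)) : ℂ :=
  (pdR j a y : ℂ) * Qfun u y

/-- The Morawetz multiplier vector field (its `j`-th component), complex form. -/
def Gfun (j : Fin d) (y : EuclideanSpace ℝ (Fin d)) : ℂ :=
  T1 u a j y - T2 u a j y + 4 * T3 u a j y - 2 * T4 u a j y

def f1fun (x : EuclideanSpace ℝ (Fin d)) : ℂ :=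
  lapC u x * ((lapR a x : ℂ) * (starRingEnd ℂ) (u x) + 2 * Sfun u a x)

def f3fun (x : EuclideanSpace ℝ (Fin d)) : ℂ :=
  ∑ j, ∑ k, pdC j u x * (pdR j (pdR k a) x : ℂ) * (starRingEnd ℂ) (pdC k u x)

def g2fun (x : EuclideanSpace ℝ (Fin d)) : ℝ :=
  lapR (lapR a) x * Complex.normSq (u x)

variable {u a}

/-! ### Smoothness bank -/

lemma cd_conj {f : EuclideanSpace ℝ (Fin d) → ℂ} (hf : ContDiff ℝ (⊤:ℕ∞) f) :
    ContDiff ℝ (⊤:ℕ∞) (fun y => (starRingEnd ℂ) (f y)) :=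
  Complex.conjCLE.contDiff.comp hf

lemma cd_ofReal {f : EuclideanSpace ℝ (Fin d) → ℝ} (hf : ContDiff ℝ (⊤:ℕ∞) f) :
    ContDiff ℝ (⊤:ℕ∞) (fun y => ((f y : ℂ))) :=
  Complex.ofRealCLM.contDiff.comp hf

section Bank

variable (hu : ContDiff ℝ (⊤:ℕ∞) u) (ha : ContDiff ℝ (⊤:ℕ∞) a)

include ha in
lemma cd_lapR : ContDiff ℝ (⊤:ℕ∞) (lapR a) := by
  have : lapR a = fun x => ∑ i, pdR i (pdR i a) x := funext (lapR_eq ha)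
  rw [this]
  exact ContDiff.sum fun i _ => contDiff_pdR (contDiff_pdR ha i) i

include hu in
lemma cd_lapC : ContDiff ℝ (⊤:ℕ∞) (lapC u) := by
  have : lapC u = fun x => ∑ i, pdC i (pdC i u) x := funext (lapC_eq hu)
  rw [this]
  exact ContDiff.sum fun i _ => contDiff_pdC (contDiff_pdC hu i) i

include hu ha in
lemma cd_S : ContDiff ℝ (⊤:ℕ∞) (Sfun u a) :=
  ContDiff.sum fun k _ =>
    (cd_ofReal (contDiff_pdR ha k)).mul (cd_conj (contDiff_pdC hu k))

include hu in
lemma cd_Q : ContDiff ℝ (⊤:ℕ∞) (Qfun u) :=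
  ContDiff.sum fun k _ =>
    (contDiff_pdC hu k).mul (cd_conj (contDiff_pdC hu k))

include hu ha in
lemma cd_T1 (j : Fin d) : ContDiff ℝ (⊤:ℕ∞) (T1 u a j) :=
  (cd_ofReal (cd_lapR ha)).mul
    (((contDiff_pdC hu j).mul (cd_conj hu)).add (hu.mul (cd_conj (contDiff_pdC hu j))))

include hu ha in
lemma cd_T2 (j : Fin d) : ContDiff ℝ (⊤:ℕ∞) (T2 u a j) :=
  (cd_ofReal (contDiff_pdR (cd_lapR ha) j)).mul (hu.mul (cd_conj hu))

include hu ha in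
lemma cd_T3 (j : Fin d) : ContDiff ℝ (⊤:ℕ∞) (T3 u a j) :=
  (contDiff_pdC hu j).mul (cd_S hu ha)

include hu ha in
lemma cd_T4 (j : Fin d) : ContDiff ℝ (⊤:ℕ∞) (T4 u a j) :=
  (cd_ofReal (contDiff_pdR ha j)).mul (cd_Q hu)

include hu ha in
lemma cd_G (j : Fin d) : ContDiff ℝ (⊤:ℕ∞) (Gfun u a j) :=
  (((cd_T1 hu ha j).sub (cd_T2 hu ha j)).add (contDiff_const.mul (cd_T3 hu ha j))).sub
    (contDiff_const.mul (cd_T4 hu ha j))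

end Bank

section SuppBank

variable (hs : HasCompactSupport u)
include hs

lemma supp_conj : HasCompactSupport (fun y => (starRingEnd ℂ) (u y)) :=
  hs.comp_left (map_zero _)

lemma supp_lapC (hu : ContDiff ℝ (⊤:ℕ∞) u) : HasCompactSupport (lapC u) := by
  have : lapC u = fun x => ∑ i, pdC i (pdC i u) x := funext (lapC_eq hu)
  rw [this]
  exact hcs_sum _ fun i => supp_pdC (supp_pdC hs i) i

lemma supp_T1 (j : Fin d) : HasCompactSupport (T1 u a j) :=
  HasCompactSupport.mul_left
    (f' := fun y => pdC j u y * (starRingEnd ℂ) (u y) + u y * (starRingEnd ℂ) (pdC j u y))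
    (((supp_pdC hs j).mul_right).add (hs.mul_right))

lemma supp_T2 (j : Fin d) : HasCompactSupport (T2 u a j) :=
  HasCompactSupport.mul_left (hs.mul_right)

lemma supp_T3 (j : Fin d) : HasCompactSupport (T3 u a j) :=
  (supp_pdC hs j).mul_right

lemma supp_T4 (j : Fin d) : HasCompactSupport (T4 u a j) := by
  have : HasCompactSupport (Qfun u) :=
    hcs_sum _ fun k => (supp_pdC hs k).mul_right
  exact this.mul_left

lemma supp_G (j : Fin d) : HasCompactSupport (Gfun u a j) := by
  have h12 : HasCompactSupport (fun y => T1 u a j y - T2 u a j y) := by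
    have := (supp_T1 (a := a) hs j).add ((supp_T2 (a := a) hs j).comp_left (g := Neg.neg) neg_zero)
    simpa [sub_eq_add_neg, Pi.add_def, Function.comp_def] using this
  have h3 : HasCompactSupport (fun y => (4:ℂ) * T3 u a j y) :=
    (supp_T3 (a := a) hs j).mul_left
  have h4 : HasCompactSupport (fun y => (2:ℂ) * T4 u a j y) :=
    (supp_T4 (a := a) hs j).mul_left
  have := (h12.add h3).add (h4.comp_left (g := Neg.neg) neg_zero)
  rw [show Gfun u a j = fun y => T1 u a j y + -T2 u a j y + 4 * T3 u a j y + -(2 * T4 u a j y)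
    from funext fun y => by simp [Gfun, sub_eq_add_neg]]
  simpa [Gfun, sub_eq_add_neg, Pi.add_def, Function.comp_def] using this

lemma supp_f1 (hu : ContDiff ℝ (⊤:ℕ∞) u) : HasCompactSupport (f1fun u a) :=
  (supp_lapC hs hu).mul_right

lemma supp_f3 : HasCompactSupport (f3fun u a) :=
  hcs_sum _ fun j => hcs_sum _ fun k => ((supp_pdC hs j).mul_right).mul_right

lemma supp_g2 : HasCompactSupport (g2fun u a) :=
  HasCompactSupport.mul_left (hs.comp_left (g := Complex.normSq) (map_zero _))

end SuppBank

/-! ### Derivative computations -/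

section Deriv

variable (hu : ContDiff ℝ (⊤:ℕ∞) u) (ha : ContDiff ℝ (⊤:ℕ∞) a)
include hu ha

lemma pdC_S (j : Fin d) (x : EuclideanSpace ℝ (Fin d)) :
    pdC j (Sfun u a) x
      = ∑ k, ((pdR j (pdR k a) x : ℂ) * (starRingEnd ℂ) (pdC k u x)
          + (pdR k a x : ℂ) * (starRingEnd ℂ) (pdC j (pdC k u) x)) := by
  have h : pdC j (Sfun u a) x = ∑ k, pdC j
      (fun y => (pdR k a y : ℂ) * (starRingEnd ℂ) (pdC k u y)) x :=
    pdC_sum _ (fun k => (cd_ofReal (contDiff_pdR ha k)).differentiable (by simp) |>.mul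
      ((cd_conj (contDiff_pdC hu k)).differentiable (by simp))) j x
  rw [h]
  refine Finset.sum_congr rfl fun k _ => ?_
  rw [pdC_mul (diffTop (cd_ofReal (contDiff_pdR ha k))) (diffTop (cd_conj (contDiff_pdC hu k))),
    pdC_ofReal (diffTop (contDiff_pdR ha k)), pdC_conj (diffTop (contDiff_pdC hu k))]

omit ha in
lemma pdC_Q (j : Fin d) (x : EuclideanSpace ℝ (Fin d)) :
    pdC j (Qfun u) x
      = ∑ k, (pdC j (pdC k u) x * (starRingEnd ℂ) (pdC k u x)
          + pdC k u x * (starRingEnd ℂ) (pdC j (pdC k u) x)) := by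
  have h : pdC j (Qfun u) x = ∑ k, pdC j
      (fun y => pdC k u y * (starRingEnd ℂ) (pdC k u y)) x :=
    pdC_sum _ (fun k => (diffTop (contDiff_pdC hu k)).mul
      (diffTop (cd_conj (contDiff_pdC hu k)))) j x
  rw [h]
  refine Finset.sum_congr rfl fun k _ => ?_
  rw [pdC_mul (diffTop (contDiff_pdC hu k)) (diffTop (cd_conj (contDiff_pdC hu k))),
    pdC_conj (diffTop (contDiff_pdC hu k))]

lemma pdC_T1 (j : Fin d) (x : EuclideanSpace ℝ (Fin d)) :
    pdC j (T1 u a j) x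
      = (pdR j (lapR a) x : ℂ)
          * (pdC j u x * (starRingEnd ℂ) (u x) + u x * (starRingEnd ℂ) (pdC j u x))
        + (lapR a x : ℂ)
          * ((pdC j (pdC j u) x * (starRingEnd ℂ) (u x)
              + pdC j u x * (starRingEnd ℂ) (pdC j u x))
            + (pdC j u x * (starRingEnd ℂ) (pdC j u x)
              + u x * (starRingEnd ℂ) (pdC j (pdC j u) x))) := by
  have d1 : Differentiable ℝ (fun y => ((lapR a y : ℂ))) := diffTop (cd_ofReal (cd_lapR ha))
  have d2 : Differentiable ℝ (fun y => pdC j u y * (starRingEnd ℂ) (u y)) :=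
    (diffTop (contDiff_pdC hu j)).mul (diffTop (cd_conj hu))
  have d3 : Differentiable ℝ (fun y => u y * (starRingEnd ℂ) (pdC j u y)) :=
    (diffTop hu).mul (diffTop (cd_conj (contDiff_pdC hu j)))
  rw [show T1 u a j = fun y => (lapR a y : ℂ) * (pdC j u y * (starRingEnd ℂ) (u y)
      + u y * (starRingEnd ℂ) (pdC j u y)) from rfl]
  rw [pdC_mul d1 (d2.fun_add d3), pdC_ofReal (diffTop (cd_lapR ha)), pdC_add d2 d3,
    pdC_mul (diffTop (contDiff_pdC hu j)) (diffTop (cd_conj hu)),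
    pdC_mul (diffTop hu) (diffTop (cd_conj (contDiff_pdC hu j))),
    pdC_conj (diffTop hu), pdC_conj (diffTop (contDiff_pdC hu j))]

lemma pdC_T2 (j : Fin d) (x : EuclideanSpace ℝ (Fin d)) :
    pdC j (T2 u a j) x
      = (pdR j (pdR j (lapR a)) x : ℂ) * (u x * (starRingEnd ℂ) (u x))
        + (pdR j (lapR a) x : ℂ)
          * (pdC j u x * (starRingEnd ℂ) (u x) + u x * (starRingEnd ℂ) (pdC j u x)) := by
  have d1 : Differentiable ℝ (fun y => ((pdR j (lapR a) y : ℂ))) :=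
    diffTop (cd_ofReal (contDiff_pdR (cd_lapR ha) j))
  have d2 : Differentiable ℝ (fun y => u y * (starRingEnd ℂ) (u y)) :=
    (diffTop hu).mul (diffTop (cd_conj hu))
  rw [show T2 u a j = fun y => (pdR j (lapR a) y : ℂ) * (u y * (starRingEnd ℂ) (u y)) from rfl]
  rw [pdC_mul d1 d2, pdC_ofReal (diffTop (contDiff_pdR (cd_lapR ha) j)),
    pdC_mul (diffTop hu) (diffTop (cd_conj hu)), pdC_conj (diffTop hu)]

lemma pdC_T3 (j : Fin d) (x : EuclideanSpace ℝ (Fin d)) :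
    pdC j (T3 u a j) x
      = pdC j (pdC j u) x * Sfun u a x
        + pdC j u x * ∑ k, ((pdR j (pdR k a) x : ℂ) * (starRingEnd ℂ) (pdC k u x)
            + (pdR k a x : ℂ) * (starRingEnd ℂ) (pdC j (pdC k u) x)) := by
  rw [show T3 u a j = fun y => pdC j u y * Sfun u a y from rfl]
  rw [pdC_mul (diffTop (contDiff_pdC hu j)) (diffTop (cd_S hu ha)), pdC_S hu ha]

lemma pdC_T4 (j : Fin d) (x : EuclideanSpace ℝ (Fin d)) :
    pdC j (T4 u a j) x
      = (pdR j (pdR j a) x : ℂ) * Qfun u x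
        + (pdR j a x : ℂ) * ∑ k, (pdC j (pdC k u) x * (starRingEnd ℂ) (pdC k u x)
            + pdC k u x * (starRingEnd ℂ) (pdC j (pdC k u) x)) := by
  rw [show T4 u a j = fun y => (pdR j a y : ℂ) * Qfun u y from rfl]
  rw [pdC_mul (diffTop (cd_ofReal (contDiff_pdR ha j))) (diffTop (cd_Q hu)),
    pdC_ofReal (diffTop (contDiff_pdR ha j)), pdC_Q hu]

lemma pdC_G (j : Fin d) (x : EuclideanSpace ℝ (Fin d)) :
    pdC j (Gfun u a j) x
      = pdC j (T1 u a j) x - pdC j (T2 u a j) x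
        + 4 * pdC j (T3 u a j) x - 2 * pdC j (T4 u a j) x := by
  have dT1 := diffTop (cd_T1 hu ha j)
  have dT2 := diffTop (cd_T2 hu ha j)
  have dT3 := diffTop (cd_T3 hu ha j)
  have dT4 := diffTop (cd_T4 hu ha j)
  rw [show Gfun u a j = fun y => (T1 u a j y - T2 u a j y + 4 * T3 u a j y)
      - 2 * T4 u a j y from rfl]
  rw [pdC_sub ((dT1.fun_sub dT2).fun_add (dT3.const_mul 4)) (dT4.const_mul 2),
    pdC_add (dT1.fun_sub dT2) (dT3.const_mul 4), pdC_sub dT1 dT2,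
    pdC_const_mul dT3 4, pdC_const_mul dT4 2]

end Deriv

/-! ### The divergence identity, pointwise -/

section Pointwise

variable (hu : ContDiff ℝ (⊤:ℕ∞) u) (ha : ContDiff ℝ (⊤:ℕ∞) a)
include hu ha

lemma sum_pdC_G (x : EuclideanSpace ℝ (Fin d)) :
    ∑ j, pdC j (Gfun u a j) x
      = (2 * f1fun u a x - ((g2fun u a x : ℝ) : ℂ) + 4 * f3fun u a x)
        + ((lapR a x : ℂ) * (u x * (starRingEnd ℂ) (lapC u x)
              - lapC u x * (starRingEnd ℂ) (u x))
          + 2 * ∑ j, ∑ k, (pdR k a x : ℂ)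
              * (pdC j u x * (starRingEnd ℂ) (pdC j (pdC k u) x)
                - pdC j (pdC k u) x * (starRingEnd ℂ) (pdC j u x))) := by
  have hE : ∀ j, pdC j (Gfun u a j) x
      = (lapR a x:ℂ) * (pdC j (pdC j u) x * (starRingEnd ℂ) (u x))
        + (lapR a x:ℂ) * (u x * (starRingEnd ℂ) (pdC j (pdC j u) x))
        + 2 * ((lapR a x:ℂ) * (pdC j u x * (starRingEnd ℂ) (pdC j u x)))
        - (pdR j (pdR j (lapR a)) x:ℂ) * (u x * (starRingEnd ℂ) (u x))
        + 4 * (pdC j (pdC j u) x * Sfun u a x)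
        + 4 * (pdC j u x * ∑ k, (pdR j (pdR k a) x:ℂ) * (starRingEnd ℂ) (pdC k u x))
        + 4 * (pdC j u x * ∑ k, (pdR k a x:ℂ) * (starRingEnd ℂ) (pdC j (pdC k u) x))
        - 2 * ((pdR j (pdR j a) x:ℂ) * Qfun u x)
        - 2 * ((pdR j a x:ℂ) * ∑ k, pdC j (pdC k u) x * (starRingEnd ℂ) (pdC k u x))
        - 2 * ((pdR j a x:ℂ) * ∑ k, pdC k u x * (starRingEnd ℂ) (pdC j (pdC k u) x)) := by
    intro j
    rw [pdC_G hu ha, pdC_T1 hu ha, pdC_T2 hu ha, pdC_T3 hu ha, pdC_T4 hu ha,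
      Finset.sum_add_distrib, Finset.sum_add_distrib]
    ring
  rw [Finset.sum_congr rfl (fun j _ => hE j)]
  simp only [Finset.sum_add_distrib, Finset.sum_sub_distrib]
  have h1 : ∑ j, (lapR a x:ℂ) * (pdC j (pdC j u) x * (starRingEnd ℂ) (u x))
      = (lapR a x:ℂ) * (lapC u x * (starRingEnd ℂ) (u x)) := by
    rw [← Finset.mul_sum, ← Finset.sum_mul, ← lapC_eq hu]
  have h2 : ∑ j, (lapR a x:ℂ) * (u x * (starRingEnd ℂ) (pdC j (pdC j u) x))
      = (lapR a x:ℂ) * (u x * (starRingEnd ℂ) (lapC u x)) := by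
    rw [← Finset.mul_sum, ← Finset.mul_sum, ← map_sum (starRingEnd ℂ), ← lapC_eq hu]
  have h3 : ∑ j, 2 * ((lapR a x:ℂ) * (pdC j u x * (starRingEnd ℂ) (pdC j u x)))
      = 2 * ((lapR a x:ℂ) * Qfun u x) := by
    rw [← Finset.mul_sum, ← Finset.mul_sum]; rfl
  have h4 : ∑ j, (pdR j (pdR j (lapR a)) x:ℂ) * (u x * (starRingEnd ℂ) (u x))
      = ((lapR (lapR a) x : ℝ):ℂ) * (u x * (starRingEnd ℂ) (u x)) := by
    rw [← Finset.sum_mul, ← Complex.ofReal_sum, ← lapR_eq (cd_lapR ha)]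
  have h5 : ∑ j, 4 * (pdC j (pdC j u) x * Sfun u a x)
      = 4 * (lapC u x * Sfun u a x) := by
    rw [← Finset.mul_sum, ← Finset.sum_mul, ← lapC_eq hu]
  have h6 : ∑ j, 4 * (pdC j u x * ∑ k, (pdR j (pdR k a) x:ℂ) * (starRingEnd ℂ) (pdC k u x))
      = 4 * f3fun u a x := by
    rw [← Finset.mul_sum]
    congr 1
    refine Finset.sum_congr rfl fun j _ => ?_
    rw [Finset.mul_sum]
    exact Finset.sum_congr rfl fun k _ => (mul_assoc _ _ _).symm
  have h7 : ∑ j, 4 * (pdC j u x * ∑ k, (pdR k a x:ℂ) * (starRingEnd ℂ) (pdC j (pdC k u) x))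
      = 4 * ∑ j, ∑ k, (pdR k a x:ℂ) * (pdC j u x * (starRingEnd ℂ) (pdC j (pdC k u) x)) := by
    rw [← Finset.mul_sum]
    congr 1
    refine Finset.sum_congr rfl fun j _ => ?_
    rw [Finset.mul_sum]
    exact Finset.sum_congr rfl fun k _ => by ring
  have h8 : ∑ j, 2 * ((pdR j (pdR j a) x:ℂ) * Qfun u x)
      = 2 * (((lapR a x : ℝ):ℂ) * Qfun u x) := by
    rw [← Finset.mul_sum, ← Finset.sum_mul, ← Complex.ofReal_sum, ← lapR_eq ha]
  have h9 : ∑ j, 2 * ((pdR j a x:ℂ) * ∑ k, pdC j (pdC k u) x * (starRingEnd ℂ) (pdC k u x))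
      = 2 * ∑ j, ∑ k, (pdR k a x:ℂ) * (pdC j (pdC k u) x * (starRingEnd ℂ) (pdC j u x)) := by
    rw [← Finset.mul_sum]
    congr 1
    rw [show (∑ j, ((pdR j a x:ℂ) * ∑ k, pdC j (pdC k u) x * (starRingEnd ℂ) (pdC k u x)))
        = ∑ j, ∑ k, (pdR j a x:ℂ) * (pdC j (pdC k u) x * (starRingEnd ℂ) (pdC k u x))
      from Finset.sum_congr rfl fun j _ => Finset.mul_sum _ _ _]
    rw [Finset.sum_comm]
    refine Finset.sum_congr rfl fun j _ => Finset.sum_congr rfl fun k _ => ?_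
    rw [pdC_swap hu k j]
  have h10 : ∑ j, 2 * ((pdR j a x:ℂ) * ∑ k, pdC k u x * (starRingEnd ℂ) (pdC j (pdC k u) x))
      = 2 * ∑ j, ∑ k, (pdR k a x:ℂ) * (pdC j u x * (starRingEnd ℂ) (pdC j (pdC k u) x)) := by
    rw [← Finset.mul_sum]
    congr 1
    rw [show (∑ j, ((pdR j a x:ℂ) * ∑ k, pdC k u x * (starRingEnd ℂ) (pdC j (pdC k u) x)))
        = ∑ j, ∑ k, (pdR j a x:ℂ) * (pdC k u x * (starRingEnd ℂ) (pdC j (pdC k u) x))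
      from Finset.sum_congr rfl fun j _ => Finset.mul_sum _ _ _]
    rw [Finset.sum_comm]
    refine Finset.sum_congr rfl fun j _ => Finset.sum_congr rfl fun k _ => ?_
    rw [pdC_swap hu k j]
  rw [h1, h2, h3, h4, h5, h6, h7, h8, h9, h10]
  have hg2 : ((g2fun u a x : ℝ) : ℂ)
      = ((lapR (lapR a) x : ℝ):ℂ) * (u x * (starRingEnd ℂ) (u x)) := by
    simp [g2fun, Complex.ofReal_mul, Complex.mul_conj]
  have hErr : ∑ j, ∑ k, (pdR k a x : ℂ)
        * (pdC j u x * (starRingEnd ℂ) (pdC j (pdC k u) x)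
          - pdC j (pdC k u) x * (starRingEnd ℂ) (pdC j u x))
      = (∑ j, ∑ k, (pdR k a x:ℂ) * (pdC j u x * (starRingEnd ℂ) (pdC j (pdC k u) x)))
        - ∑ j, ∑ k, (pdR k a x:ℂ) * (pdC j (pdC k u) x * (starRingEnd ℂ) (pdC j u x)) := by
    simp [mul_sub, Finset.sum_sub_distrib]
  rw [hg2, hErr]
  simp only [f1fun]
  ring

end Pointwise

/-! ### Real part of the divergence identity -/

section PointwiseRe

variable (hu : ContDiff ℝ (⊤:ℕ∞) u) (ha : ContDiff ℝ (⊤:ℕ∞) a)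
include hu ha

lemma pointwise_re (x : EuclideanSpace ℝ (Fin d)) :
    ∑ j, pdR j (fun y => (Gfun u a j y).re) x
      = 2 * (f1fun u a x).re - g2fun u a x + 4 * (f3fun u a x).re := by
  have h1 : ∀ j, pdR j (fun y => (Gfun u a j y).re) x = (pdC j (Gfun u a j) x).re :=
    fun j => pdR_re (diffTop (cd_G hu ha j)) j x
  rw [Finset.sum_congr rfl fun j _ => h1 j, ← Complex.re_sum, sum_pdC_G hu ha x]
  have hpair : ∀ z w : ℂ, (z * (starRingEnd ℂ) w - w * (starRingEnd ℂ) z).re = 0 := by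
    intro z w
    simp only [Complex.sub_re, Complex.mul_re, Complex.conj_re, Complex.conj_im]
    ring
  have herr1 : ((lapR a x : ℂ) * (u x * (starRingEnd ℂ) (lapC u x)
      - lapC u x * (starRingEnd ℂ) (u x))).re = 0 := by
    rw [Complex.re_ofReal_mul, hpair, mul_zero]
  have herr2 : ((2:ℂ) * ∑ j, ∑ k, (pdR k a x : ℂ)
        * (pdC j u x * (starRingEnd ℂ) (pdC j (pdC k u) x)
          - pdC j (pdC k u) x * (starRingEnd ℂ) (pdC j u x))).re = 0 := by
    have hz : (∑ j : Fin d, ∑ k : Fin d, (pdR k a x : ℂ)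
        * (pdC j u x * (starRingEnd ℂ) (pdC j (pdC k u) x)
          - pdC j (pdC k u) x * (starRingEnd ℂ) (pdC j u x))).re = 0 := by
      rw [Complex.re_sum]
      refine Finset.sum_eq_zero fun j _ => ?_
      rw [Complex.re_sum]
      refine Finset.sum_eq_zero fun k _ => ?_
      rw [Complex.re_ofReal_mul, hpair, mul_zero]
    rw [Complex.mul_re, hz]
    simp
  have hre2 : ∀ z : ℂ, ((2:ℂ) * z).re = 2 * z.re := by
    intro z; rw [Complex.mul_re]; simp
  have hre4 : ∀ z : ℂ, ((4:ℂ) * z).re = 4 * z.re := by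
    intro z; rw [Complex.mul_re]; simp
  simp only [Complex.add_re, Complex.sub_re]
  rw [herr1, herr2, hre2, hre4, Complex.ofReal_re]
  ring

end PointwiseRe

/-! ### Integrability bank and the integral identity -/

section IntegralBank

variable (hu : ContDiff ℝ (⊤:ℕ∞) u) (ha : ContDiff ℝ (⊤:ℕ∞) a)

include hu ha in
lemma cd_f1 : ContDiff ℝ (⊤:ℕ∞) (f1fun u a) :=
  (cd_lapC hu).mul (((cd_ofReal (cd_lapR ha)).mul (cd_conj hu)).add
    (contDiff_const.mul (cd_S hu ha)))

include hu ha in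
lemma cd_f3 : ContDiff ℝ (⊤:ℕ∞) (f3fun u a) :=
  ContDiff.sum fun j _ => ContDiff.sum fun k _ =>
    ((contDiff_pdC hu j).mul (cd_ofReal (contDiff_pdR (contDiff_pdR ha k) j))).mul
      (cd_conj (contDiff_pdC hu k))

include hu ha in
lemma cd_g2 : ContDiff ℝ (⊤:ℕ∞) (g2fun u a) := by
  have h : (fun x => Complex.normSq (u x))
      = fun x => (u x).re * (u x).re + (u x).im * (u x).im :=
    funext fun x => by simp [Complex.normSq_apply]
  have hn : ContDiff ℝ (⊤:ℕ∞) (fun x => Complex.normSq (u x)) := by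
    rw [h]
    exact ((Complex.reCLM.contDiff.comp hu).mul (Complex.reCLM.contDiff.comp hu)).add
      ((Complex.imCLM.contDiff.comp hu).mul (Complex.imCLM.contDiff.comp hu))
  exact (cd_lapR (cd_lapR ha)).mul hn

include hu ha in
lemma integral_divergence_zero (husupp : HasCompactSupport u) :
    ∫ x, (2 * (f1fun u a x).re - g2fun u a x + 4 * (f3fun u a x).re) = 0 := by
  have hFc : ∀ j, ContDiff ℝ (⊤:ℕ∞) (fun y => (Gfun u a j y).re) := fun j =>
    Complex.reCLM.contDiff.comp (cd_G hu ha j)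
  have hFs : ∀ j, HasCompactSupport (fun y => (Gfun u a j y).re) := fun j =>
    (supp_G husupp j).comp_left rfl
  calc ∫ x, (2 * (f1fun u a x).re - g2fun u a x + 4 * (f3fun u a x).re)
      = ∫ x, ∑ j, pdR j (fun y => (Gfun u a j y).re) x :=
        integral_congr_ae (Filter.Eventually.of_forall fun x => (pointwise_re hu ha x).symm)
    _ = ∑ j, ∫ x, pdR j (fun y => (Gfun u a j y).re) x :=
        integral_finset_sum _ fun j _ =>
          (contDiff_pdR (hFc j) j).continuous.integrable_of_hasCompactSupport
            (supp_pdR (hFs j) j)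
    _ = 0 := Finset.sum_eq_zero fun j _ => integral_fderiv_zero _ (hFc j) (hFs j) _

end IntegralBank

end MorawetzAux

open MorawetzAux

/-- **Classical Morawetz integration-by-parts identity for the Laplacian part of the
multiplier computation** (used in eq. 3.9 of Proposition 3.1 and in the Appendix of
the paper). For `u : ℝ^d → ℂ` smooth and compactly supported and `a : ℝ^d → ℝ` smooth:
`2 Re ∫ Δu·(Δa·conj u + 2⟨∇a, ∇ conj u⟩) = ∫ Δ²a·|u|² - 4 Re ∫ Σ_{j,k} ∂_j u·∂_j∂_k a·∂_k conj u`. -/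
theorem morawetz_laplacian_identity (d : ℕ) (hd : 1 ≤ d)
    (u : EuclideanSpace ℝ (Fin d) → ℂ)
    (hu : ContDiff ℝ (⊤ : ℕ∞) u) (husupp : HasCompactSupport u)
    (a : EuclideanSpace ℝ (Fin d) → ℝ) (ha : ContDiff ℝ (⊤ : ℕ∞) a) :
    2 * (∫ x, lapC u x * ((lapR a x : ℂ) * (starRingEnd ℂ) (u x)
          + 2 * ∑ j, (pdR j a x : ℂ)
              * pdC j (fun y => (starRingEnd ℂ) (u y)) x)).re
      = (∫ x, lapR (lapR a) x * Complex.normSq (u x))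
        - 4 * (∫ x, ∑ j, ∑ k, pdC j u x * (pdR j (pdR k a) x : ℂ)
            * pdC k (fun y => (starRingEnd ℂ) (u y)) x).re := by
  have du : Differentiable ℝ u := diffTop hu
  simp only [pdC_conj du]
  show 2 * (∫ x, f1fun u a x).re
      = (∫ x, g2fun u a x) - 4 * (∫ x, f3fun u a x).re
  have hI1 : Integrable (f1fun u a) :=
    (cd_f1 hu ha).continuous.integrable_of_hasCompactSupport (supp_f1 husupp hu)
  have hI2 : Integrable (g2fun u a) :=
    (cd_g2 hu ha).continuous.integrable_of_hasCompactSupport (supp_g2 husupp)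
  have hI3 : Integrable (f3fun u a) :=
    (cd_f3 hu ha).continuous.integrable_of_hasCompactSupport (supp_f3 husupp)
  have hIa : Integrable (fun x => 2 * (f1fun u a x).re) :=
    (continuous_const.mul (Complex.continuous_re.comp (cd_f1 hu ha).continuous))
      |>.integrable_of_hasCompactSupport
        (((supp_f1 husupp hu).comp_left (g := Complex.re) rfl).mul_left)
  have hIc : Integrable (fun x => 4 * (f3fun u a x).re) :=
    (continuous_const.mul (Complex.continuous_re.comp (cd_f3 hu ha).continuous))
      |>.integrable_of_hasCompactSupport
        (((supp_f3 husupp).comp_left (g := Complex.re) rfl).mul_left)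
  have hzero := integral_divergence_zero hu ha husupp
  have e1 : ∫ x, (2 * (f1fun u a x).re - g2fun u a x)
      = (∫ x, 2 * (f1fun u a x).re) - ∫ x, g2fun u a x := integral_sub hIa hI2
  have e2 : ∫ x, ((2 * (f1fun u a x).re - g2fun u a x) + 4 * (f3fun u a x).re)
      = (∫ x, (2 * (f1fun u a x).re - g2fun u a x)) + ∫ x, 4 * (f3fun u a x).re :=
    integral_add (hIa.sub hI2) hIc
  rw [e2, e1] at hzero
  have h2int : ∫ x, 2 * (f1fun u a x).re = 2 * ∫ x, (f1fun u a x).re :=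
    integral_const_mul 2 _
  have h4int : ∫ x, 4 * (f3fun u a x).re = 4 * ∫ x, (f3fun u a x).re :=
    integral_const_mul 4 _
  rw [h2int, h4int] at hzero
  have hre1 : (∫ x, f1fun u a x).re = ∫ x, (f1fun u a x).re := (integral_re hI1).symm
  have hre3 : (∫ x, f3fun u a x).re = ∫ x, (f3fun u a x).re := (integral_re hI3).symm
  rw [hre1, hre3]
  linarith

end
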